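/- For all s, s' ∈ ℝ and all a, b, c, d, e > 0, one has ∫_{-∞}^{s} ∫_{-∞}^{s'} exp(−a|r−r'| − b|r−s| − c|r'−s'| − d|r−s'| − e|r'−s|) dr' dr ≤ 10·e^{−min(d,e)·|s−s'|/2} / ((b+d)(c+e) + a·min(b+d, c+e)). -/

import Mathlib

open MeasureTheory

open Real Set


lemma map_neg_restrict (c : ℝ) :
    (volume.restrict (Ici (-c))).map Neg.neg = volume.restrict (Iic c) := by
  conv => rhs; rw [← Measure.map_neg_eq_self (volume : Measure ℝ),
    measurableEmbedding_neg.restrict_map]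
  simp

lemma integrableOn_exp_shift_Ioi' {k : ℝ} (hk : 0 < k) (y c : ℝ) :
    IntegrableOn (fun x => Real.exp (-(k * (x - y)))) (Ioi c) := by
  have h : (fun x => Real.exp (-(k * (x - y)))) = fun x => Real.exp (k*y) * Real.exp (-k * x) := by
    ext x; rw [← Real.exp_add]; ring_nf
  rw [h]
  exact (exp_neg_integrableOn_Ioi c hk).const_mul _

lemma integrableOn_exp_shift_Iic' {k : ℝ} (hk : 0 < k) (y c : ℝ) :
    IntegrableOn (fun x => Real.exp (-(k * (y - x)))) (Iic c) := by
  rw [IntegrableOn, ← map_neg_restrict c, measurableEmbedding_neg.integrable_map_iff]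
  have h : ((fun x => Real.exp (-(k * (y - x)))) ∘ Neg.neg)
      = fun x => Real.exp (-(k * (x - (-y)))) := by
    ext x; simp only [Function.comp]; ring_nf
  rw [h, ← IntegrableOn]
  exact (integrableOn_Ici_iff_integrableOn_Ioi).mpr (integrableOn_exp_shift_Ioi' hk (-y) (-c))

lemma integral_exp_shift_Iic' {k : ℝ} (hk : 0 < k) (y : ℝ) :
    ∫ x in Iic y, Real.exp (-(k * (y - x))) = 1 / k := by
  have h : ∀ x : ℝ, Real.exp (-(k * (y - x))) = Real.exp (-(k*y)) * Real.exp (-(k * (-x))) := by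
    intro x; rw [← Real.exp_add]; ring_nf
  simp_rw [h]
  rw [integral_const_mul, integral_comp_neg_Iic (f := fun x => Real.exp (-(k * x)))]
  rw [integral_comp_mul_left_Ioi (fun x => Real.exp (-x)) _ hk]
  simp only [smul_eq_mul, mul_comm k (-y)]
  rw [integral_exp_neg_Ioi]
  rw [show -(-y*k) = k*y by ring, Real.exp_neg]
  field_simp

lemma integral_exp_shift_Ioi' {k : ℝ} (hk : 0 < k) (y : ℝ) :
    ∫ x in Ioi y, Real.exp (-(k * (x - y))) = 1 / k := by
  have h : ∀ x : ℝ, Real.exp (-(k * (x - y))) = Real.exp (k*y) * Real.exp (-(k * x)) := by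
    intro x; rw [← Real.exp_add]; ring_nf
  simp_rw [h]
  rw [integral_const_mul, integral_comp_mul_left_Ioi (fun x => Real.exp (-x)) _ hk]
  simp only [smul_eq_mul]
  rw [integral_exp_neg_Ioi, Real.exp_neg]
  field_simp

lemma outer_int (α β s' s : ℝ) (hα : 0 < α) (hβ : 0 < β) (hss : s' ≤ s) :
    IntegrableOn (fun r => Real.exp (-(α * (r - s')) - β * (s - r))) (Ioc s' s) := by
  refine Integrable.mono' ((integrableOn_exp_shift_Ioi' hα s' s').mono_set Ioc_subset_Ioi_self)
    (Continuous.aestronglyMeasurable (by fun_prop)) ?_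
  refine ae_restrict_of_forall_mem measurableSet_Ioc fun r hr => ?_
  rw [norm_of_nonneg (Real.exp_pos _).le]
  apply Real.exp_le_exp.mpr
  nlinarith [mul_nonneg hβ.le (sub_nonneg.mpr hr.2)]

lemma outer_bound (α β s' s : ℝ) (hα : 0 < α) (hβ : 0 < β) (hss : s' ≤ s) :
    (∫ r in Ioc s' s, Real.exp (-(α * (r - s')) - β * (s - r))) ≤ 2 / (α + β) := by
  rcases le_total α β with h | h
  · have h1 : (∫ r in Ioc s' s, Real.exp (-(α * (r - s')) - β * (s - r)))
        ≤ ∫ r in Ioc s' s, Real.exp (-(β * (s - r))) := by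
      refine integral_mono_of_nonneg (ae_of_all _ fun r => (Real.exp_pos _).le)
        ((integrableOn_exp_shift_Iic' hβ s s).mono_set Ioc_subset_Iic_self) ?_
      refine ae_restrict_of_forall_mem measurableSet_Ioc fun r hr => ?_
      apply Real.exp_le_exp.mpr
      nlinarith [mul_nonneg hα.le (sub_nonneg.mpr hr.1.le)]
    have h2 : (∫ r in Ioc s' s, Real.exp (-(β * (s - r))))
        ≤ ∫ r in Iic s, Real.exp (-(β * (s - r))) := by
      refine setIntegral_mono_set (integrableOn_exp_shift_Iic' hβ s s)
        (ae_of_all _ fun r => (Real.exp_pos _).le)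
        (HasSubset.Subset.eventuallyLE Ioc_subset_Iic_self)
    rw [integral_exp_shift_Iic' hβ] at h2
    have h3 : 1/β ≤ 2/(α+β) := by
      rw [div_le_div_iff₀ hβ (by linarith)]; linarith
    linarith
  · have h1 : (∫ r in Ioc s' s, Real.exp (-(α * (r - s')) - β * (s - r)))
        ≤ ∫ r in Ioc s' s, Real.exp (-(α * (r - s'))) := by
      refine integral_mono_of_nonneg (ae_of_all _ fun r => (Real.exp_pos _).le)
        ((integrableOn_exp_shift_Ioi' hα s' s').mono_set Ioc_subset_Ioi_self) ?_
      refine ae_restrict_of_forall_mem measurableSet_Ioc fun r hr => ?_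
      apply Real.exp_le_exp.mpr
      nlinarith [mul_nonneg hβ.le (sub_nonneg.mpr hr.2)]
    have h2 : (∫ r in Ioc s' s, Real.exp (-(α * (r - s'))))
        ≤ ∫ r in Ioi s', Real.exp (-(α * (r - s'))) := by
      refine setIntegral_mono_set (integrableOn_exp_shift_Ioi' hα s' s')
        (ae_of_all _ fun r => (Real.exp_pos _).le)
        (HasSubset.Subset.eventuallyLE Ioc_subset_Ioi_self)
    rw [integral_exp_shift_Ioi' hα] at h2
    have h3 : 1/α ≤ 2/(α+β) := by
      rw [div_le_div_iff₀ hα (by linarith)]; linarith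
    linarith

set_option maxHeartbeats 1000000 in
lemma case_main (s s' a b c d e : ℝ) (ha : 0 < a) (hb : 0 < b) (hc : 0 < c)
    (hd : 0 < d) (he : 0 < e) (hss : s' ≤ s) :
    (∫ r in Set.Iic s, ∫ r' in Set.Iic s',
        Real.exp (-(a * |r - r'|) - b * |r - s| - c * |r' - s'|
                  - d * |r - s'| - e * |r' - s|))
      ≤ 7 * Real.exp (-(e * (s - s'))) / ((b + d) * (c + e) + a * min (b + d) (c + e)) := by
  have hC : (0:ℝ) < c + e := by linarith
  have haC : (0:ℝ) < a + c + e := by linarith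
  have haB : (0:ℝ) < a + b + d := by linarith
  have hBC : (0:ℝ) < b + d + c + e := by linarith
  have hFc : Continuous (fun p : ℝ × ℝ => Real.exp (-(a * |p.1 - p.2|) - b * |p.1 - s|
      - c * |p.2 - s'| - d * |p.1 - s'| - e * |p.2 - s|)) := by fun_prop
  set G : ℝ → ℝ := fun r => ∫ r' in Set.Iic s',
      Real.exp (-(a * |r - r'|) - b * |r - s| - c * |r' - s'|
                  - d * |r - s'| - e * |r' - s|) with hGdef
  have hGnn : ∀ r, 0 ≤ G r := fun r => integral_nonneg fun r' => (Real.exp_pos _).le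
  have hGm : AEStronglyMeasurable G (volume.restrict (Set.Iic s)) :=
    (hFc.stronglyMeasurable.integral_prod_right').aestronglyMeasurable
  -- integrability of inner integrand
  have hInner : ∀ r : ℝ, IntegrableOn (fun r' => Real.exp (-(a * |r - r'|) - b * |r - s|
      - c * |r' - s'| - d * |r - s'| - e * |r' - s|)) (Set.Iic s') := by
    intro r
    refine Integrable.mono' ((integrableOn_exp_shift_Iic' hC s' s').const_mul
      (Real.exp (-(b * |r - s|)))) (Continuous.aestronglyMeasurable (by fun_prop)) ?_
    refine ae_restrict_of_forall_mem measurableSet_Iic fun r' hr' => ?_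
    rw [norm_of_nonneg (Real.exp_pos _).le, ← Real.exp_add]
    apply Real.exp_le_exp.mpr
    have hr1 : r' ≤ s' := mem_Iic.mp hr'
    rw [abs_of_nonpos (show r' - s' ≤ 0 by linarith), abs_of_nonpos (show r' - s ≤ 0 by linarith)]
    have h1 : 0 ≤ a * |r - r'| := by positivity
    have h2 : 0 ≤ d * |r - s'| := by positivity
    have h3 : e * (r' - s) ≤ e * (r' - s') :=
      mul_le_mul_of_nonneg_left (by linarith) he.le
    linarith [h1, h2, h3]
  have hGbound : ∀ r ∈ Set.Iic s, G r ≤ (1/(c+e)) * Real.exp (-(b * (s - r))) := by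
    intro r hr
    have hb1 : G r ≤ ∫ r' in Set.Iic s',
        Real.exp (-(b * (s - r))) * Real.exp (-((c+e) * (s' - r'))) := by
      refine integral_mono_of_nonneg (ae_of_all _ fun r' => (Real.exp_pos _).le)
        ((integrableOn_exp_shift_Iic' hC s' s').const_mul _) ?_
      refine ae_restrict_of_forall_mem measurableSet_Iic fun r' hr' => ?_
      dsimp only
      rw [← Real.exp_add]
      apply Real.exp_le_exp.mpr
      have hr1 : r' ≤ s' := hr'
      have hrs : r ≤ s := hr
      rw [abs_of_nonpos (show r - s ≤ 0 by linarith),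
        abs_of_nonpos (show r' - s' ≤ 0 by linarith),
        abs_of_nonpos (show r' - s ≤ 0 by linarith)]
      have h1 : 0 ≤ a * |r - r'| := by positivity
      have h2 : 0 ≤ d * |r - s'| := by positivity
      have h3 : e * (s' - r') ≤ e * (s - r') := mul_le_mul_of_nonneg_left (by linarith) he.le
      linarith
    rw [integral_const_mul, integral_exp_shift_Iic' hC] at hb1
    linarith
  have hGint : IntegrableOn G (Set.Iic s) := by
    refine Integrable.mono' ((integrableOn_exp_shift_Iic' hb s s).const_mul (1/(c+e))) hGm ?_
    refine ae_restrict_of_forall_mem measurableSet_Iic fun r hr => ?_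
    rw [norm_of_nonneg (hGnn r)]
    exact hGbound r hr
  have hsplit : (∫ r in Set.Iic s, G r) = (∫ r in Set.Iic s', G r) + ∫ r in Set.Ioc s' s, G r := by
    rw [← setIntegral_union (Set.Iic_disjoint_Ioc le_rfl) measurableSet_Ioc
      (hGint.mono_set (Iic_subset_Iic.mpr hss)) (hGint.mono_set Ioc_subset_Iic_self),
      Set.Iic_union_Ioc_eq_Iic hss]
  have hRB : (∫ r in Set.Ioc s' s, G r)
      ≤ Real.exp (-(e * (s - s'))) * (2 / ((a + c + e) * (a + b + d))) := by
    have hstep : ∀ r ∈ Set.Ioc s' s, G r ≤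
        (Real.exp (-(e * (s - s'))) * (1 / (a + c + e)))
          * Real.exp (-((a + d) * (r - s')) - b * (s - r)) := by
      intro r hr
      have h1 : G r ≤ ∫ r' in Set.Iic s',
          (Real.exp (-(e * (s - s'))) * Real.exp (-((a + d) * (r - s')) - b * (s - r)))
            * Real.exp (-((a + c + e) * (s' - r'))) := by
        refine integral_mono_of_nonneg (ae_of_all _ fun r' => (Real.exp_pos _).le)
          ((integrableOn_exp_shift_Iic' haC s' s').const_mul _) ?_
        refine ae_restrict_of_forall_mem measurableSet_Iic fun r' hr' => ?_
        dsimp only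
        rw [← Real.exp_add, ← Real.exp_add]
        apply Real.exp_le_exp.mpr
        have hr1 : r' ≤ s' := hr'
        obtain ⟨hr2, hr3⟩ := hr
        rw [abs_of_nonneg (show (0:ℝ) ≤ r - r' by linarith),
          abs_of_nonpos (show r - s ≤ 0 by linarith),
          abs_of_nonpos (show r' - s' ≤ 0 by linarith),
          abs_of_nonneg (show (0:ℝ) ≤ r - s' by linarith),
          abs_of_nonpos (show r' - s ≤ 0 by linarith)]
        apply le_of_eq
        ring
      rw [integral_const_mul, integral_exp_shift_Iic' haC] at h1
      calc G r ≤ _ := h1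
        _ = (Real.exp (-(e * (s - s'))) * (1 / (a + c + e)))
          * Real.exp (-((a + d) * (r - s')) - b * (s - r)) := by ring
    have h2 : (∫ r in Set.Ioc s' s, G r) ≤
        (Real.exp (-(e * (s - s'))) * (1 / (a + c + e)))
          * ∫ r in Set.Ioc s' s, Real.exp (-((a + d) * (r - s')) - b * (s - r)) := by
      rw [← integral_const_mul]
      refine integral_mono_of_nonneg (ae_of_all _ hGnn)
        ((outer_int (a+d) b s' s (by linarith) hb hss).const_mul _)
        (ae_restrict_of_forall_mem measurableSet_Ioc hstep)
    have h3 := outer_bound (a+d) b s' s (by linarith) hb hss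
    have hE : 0 ≤ Real.exp (-(e * (s - s'))) * (1 / (a + c + e)) := by positivity
    calc (∫ r in Set.Ioc s' s, G r) ≤ _ := h2
      _ ≤ (Real.exp (-(e * (s - s'))) * (1 / (a + c + e))) * (2 / (a + d + b)) :=
        mul_le_mul_of_nonneg_left h3 hE
      _ = Real.exp (-(e * (s - s'))) * (2 / ((a + c + e) * (a + b + d))) := by
        rw [mul_assoc, div_mul_div_comm]
        ring
  have hp1 : ∀ r ∈ Set.Iic s', (∫ r' in Set.Iic r,
      Real.exp (-(a * |r - r'|) - b * |r - s| - c * |r' - s'| - d * |r - s'| - e * |r' - s|))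
      ≤ (Real.exp (-(e * (s - s'))) * (1 / (a + c + e)))
        * Real.exp (-((b + d + c + e) * (s' - r))) := by
    intro r hr
    have hr2 : r ≤ s' := hr
    have h1 : (∫ r' in Set.Iic r,
        Real.exp (-(a * |r - r'|) - b * |r - s| - c * |r' - s'| - d * |r - s'| - e * |r' - s|))
        ≤ ∫ r' in Set.Iic r,
        (Real.exp (-(e * (s - s'))) * Real.exp (-((b + d + c + e) * (s' - r))))
          * Real.exp (-((a + c + e) * (r - r'))) := by
      refine integral_mono_of_nonneg (ae_of_all _ fun r' => (Real.exp_pos _).le)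
        ((integrableOn_exp_shift_Iic' haC r r).const_mul _) ?_
      refine ae_restrict_of_forall_mem measurableSet_Iic fun r' hr' => ?_
      dsimp only
      rw [← Real.exp_add, ← Real.exp_add]
      apply Real.exp_le_exp.mpr
      have hr1 : r' ≤ r := hr'
      rw [abs_of_nonneg (show (0:ℝ) ≤ r - r' by linarith),
        abs_of_nonpos (show r - s ≤ 0 by linarith),
        abs_of_nonpos (show r' - s' ≤ 0 by linarith),
        abs_of_nonpos (show r - s' ≤ 0 by linarith),
        abs_of_nonpos (show r' - s ≤ 0 by linarith)]
      nlinarith [mul_nonneg hb.le (sub_nonneg.mpr hss)]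
    rw [integral_const_mul, integral_exp_shift_Iic' haC] at h1
    calc (∫ r' in Set.Iic r,
        Real.exp (-(a * |r - r'|) - b * |r - s| - c * |r' - s'| - d * |r - s'| - e * |r' - s|))
        ≤ _ := h1
      _ = (Real.exp (-(e * (s - s'))) * (1 / (a + c + e)))
          * Real.exp (-((b + d + c + e) * (s' - r))) := by ring
  have hBC2 : (0:ℝ) < (b + d + c + e)/2 := by linarith
  have haB2 : (0:ℝ) < (a + b + d)/2 := by linarith
  have hRA : (∫ r in Set.Iic s', G r) ≤ Real.exp (-(e * (s - s'))) *
      (1 / ((a + c + e) * (b + d + c + e)) + 4 / ((a + b + d) * (b + d + c + e))) := by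
    rcases le_total (c + e) a with hca | hca
    · -- case c + e ≤ a
      have hp2 : ∀ r ∈ Set.Iic s', (∫ r' in Set.Ioc r s',
          Real.exp (-(a * |r - r'|) - b * |r - s| - c * |r' - s'| - d * |r - s'| - e * |r' - s|))
          ≤ (Real.exp (-(e * (s - s'))) * (2 / (a + b + d)))
            * Real.exp (-((b + d + c + e)/2 * (s' - r))) := by
        intro r hr
        have hr3 : r ≤ s' := hr
        have h1 : (∫ r' in Set.Ioc r s',
            Real.exp (-(a * |r - r'|) - b * |r - s| - c * |r' - s'| - d * |r - s'| - e * |r' - s|))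
            ≤ ∫ r' in Set.Ioc r s',
            (Real.exp (-(e * (s - s'))) * Real.exp (-((b + d + c + e)/2 * (s' - r))))
              * Real.exp (-((a + b + d)/2 * (r' - r))) := by
          refine integral_mono_of_nonneg (ae_of_all _ fun r' => (Real.exp_pos _).le)
            (((integrableOn_exp_shift_Ioi' haB2 r r).mono_set Ioc_subset_Ioi_self).const_mul _) ?_
          refine ae_restrict_of_forall_mem measurableSet_Ioc fun r' hr' => ?_
          dsimp only
          rw [← Real.exp_add, ← Real.exp_add]
          apply Real.exp_le_exp.mpr
          obtain ⟨ha1, ha2⟩ := hr'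
          rw [abs_of_nonpos (show r - r' ≤ 0 by linarith),
            abs_of_nonpos (show r - s ≤ 0 by linarith),
            abs_of_nonpos (show r' - s' ≤ 0 by linarith),
            abs_of_nonpos (show r - s' ≤ 0 by linarith),
            abs_of_nonpos (show r' - s ≤ 0 by linarith)]
          nlinarith [mul_nonneg hb.le (sub_nonneg.mpr hss),
            mul_nonneg (sub_nonneg.mpr hca) (sub_nonneg.mpr ha1.le),
            mul_nonneg hBC.le (sub_nonneg.mpr ha2)]
        have h2 : (∫ r' in Set.Ioc r s',
            (Real.exp (-(e * (s - s'))) * Real.exp (-((b + d + c + e)/2 * (s' - r))))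
              * Real.exp (-((a + b + d)/2 * (r' - r))))
            ≤ ∫ r' in Set.Ioi r,
            (Real.exp (-(e * (s - s'))) * Real.exp (-((b + d + c + e)/2 * (s' - r))))
              * Real.exp (-((a + b + d)/2 * (r' - r))) := by
          refine setIntegral_mono_set ((integrableOn_exp_shift_Ioi' haB2 r r).const_mul _)
            (ae_of_all _ fun r' => by positivity)
            (HasSubset.Subset.eventuallyLE Ioc_subset_Ioi_self)
        rw [integral_const_mul, integral_const_mul, integral_exp_shift_Ioi' haB2, one_div_div] at h2
        rw [integral_const_mul] at h1
        calc (∫ r' in Set.Ioc r s',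
            Real.exp (-(a * |r - r'|) - b * |r - s| - c * |r' - s'| - d * |r - s'| - e * |r' - s|))
            ≤ _ := le_trans h1 h2
          _ = (Real.exp (-(e * (s - s'))) * (2 / (a + b + d)))
              * Real.exp (-((b + d + c + e)/2 * (s' - r))) := by ring
      have hsum : ∀ r ∈ Set.Iic s', G r ≤
          (Real.exp (-(e * (s - s'))) * (1 / (a + c + e)))
            * Real.exp (-((b + d + c + e) * (s' - r)))
          + (Real.exp (-(e * (s - s'))) * (2 / (a + b + d)))
            * Real.exp (-((b + d + c + e)/2 * (s' - r))) := by
        intro r hr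
        have hGr : G r = (∫ r' in Set.Iic r,
            Real.exp (-(a * |r - r'|) - b * |r - s| - c * |r' - s'| - d * |r - s'| - e * |r' - s|))
            + ∫ r' in Set.Ioc r s',
            Real.exp (-(a * |r - r'|) - b * |r - s| - c * |r' - s'| - d * |r - s'| - e * |r' - s|) := by
          simp only [hGdef]
          rw [← setIntegral_union (Set.Iic_disjoint_Ioc le_rfl) measurableSet_Ioc
            ((hInner r).mono_set (Iic_subset_Iic.mpr hr)) ((hInner r).mono_set Ioc_subset_Iic_self),
            Set.Iic_union_Ioc_eq_Iic hr]
        rw [hGr]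
        exact add_le_add (hp1 r hr) (hp2 r hr)
      have hfin : (∫ r in Set.Iic s', G r) ≤
          (Real.exp (-(e * (s - s'))) * (1 / (a + c + e))) * (1 / (b + d + c + e))
          + (Real.exp (-(e * (s - s'))) * (2 / (a + b + d))) * (1 / ((b + d + c + e)/2)) := by
        have hint1 : IntegrableOn (fun r => (Real.exp (-(e * (s - s'))) * (1 / (a + c + e)))
            * Real.exp (-((b + d + c + e) * (s' - r)))) (Set.Iic s') :=
          (integrableOn_exp_shift_Iic' hBC s' s').const_mul _
        have hint2 : IntegrableOn (fun r => (Real.exp (-(e * (s - s'))) * (2 / (a + b + d)))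
            * Real.exp (-((b + d + c + e)/2 * (s' - r)))) (Set.Iic s') :=
          (integrableOn_exp_shift_Iic' hBC2 s' s').const_mul _
        have h0 := integral_mono_of_nonneg (ae_of_all _ hGnn) (hint1.add hint2)
          (ae_restrict_of_forall_mem measurableSet_Iic hsum)
        simp only [Pi.add_apply] at h0
        rw [integral_add hint1 hint2, integral_const_mul, integral_const_mul,
          integral_exp_shift_Iic' hBC, integral_exp_shift_Iic' hBC2] at h0
        exact h0
      calc (∫ r in Set.Iic s', G r) ≤ _ := hfin
        _ = Real.exp (-(e * (s - s'))) *
            (1 / ((a + c + e) * (b + d + c + e)) + 4 / ((a + b + d) * (b + d + c + e))) := by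
          rw [one_div_div, mul_assoc, mul_assoc, div_mul_div_comm, div_mul_div_comm]
          ring
    · -- case a ≤ c + e
      have hp2 : ∀ r ∈ Set.Iic s', (∫ r' in Set.Ioc r s',
          Real.exp (-(a * |r - r'|) - b * |r - s| - c * |r' - s'| - d * |r - s'| - e * |r' - s|))
          ≤ (Real.exp (-(e * (s - s'))) * (2 / (b + d + c + e)))
            * Real.exp (-((a + b + d)/2 * (s' - r))) := by
        intro r hr
        have hr3 : r ≤ s' := hr
        have h1 : (∫ r' in Set.Ioc r s',
            Real.exp (-(a * |r - r'|) - b * |r - s| - c * |r' - s'| - d * |r - s'| - e * |r' - s|))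
            ≤ ∫ r' in Set.Ioc r s',
            (Real.exp (-(e * (s - s'))) * Real.exp (-((a + b + d)/2 * (s' - r))))
              * Real.exp (-((b + d + c + e)/2 * (s' - r'))) := by
          refine integral_mono_of_nonneg (ae_of_all _ fun r' => (Real.exp_pos _).le)
            (((integrableOn_exp_shift_Iic' hBC2 s' s').mono_set Ioc_subset_Iic_self).const_mul _) ?_
          refine ae_restrict_of_forall_mem measurableSet_Ioc fun r' hr' => ?_
          dsimp only
          rw [← Real.exp_add, ← Real.exp_add]
          apply Real.exp_le_exp.mpr
          obtain ⟨ha1, ha2⟩ := hr'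
          rw [abs_of_nonpos (show r - r' ≤ 0 by linarith),
            abs_of_nonpos (show r - s ≤ 0 by linarith),
            abs_of_nonpos (show r' - s' ≤ 0 by linarith),
            abs_of_nonpos (show r - s' ≤ 0 by linarith),
            abs_of_nonpos (show r' - s ≤ 0 by linarith)]
          nlinarith [mul_nonneg hb.le (sub_nonneg.mpr hss),
            mul_nonneg (sub_nonneg.mpr hca) (sub_nonneg.mpr ha2),
            mul_nonneg haB.le (sub_nonneg.mpr ha1.le)]
        have h2 : (∫ r' in Set.Ioc r s',
            (Real.exp (-(e * (s - s'))) * Real.exp (-((a + b + d)/2 * (s' - r))))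
              * Real.exp (-((b + d + c + e)/2 * (s' - r'))))
            ≤ ∫ r' in Set.Iic s',
            (Real.exp (-(e * (s - s'))) * Real.exp (-((a + b + d)/2 * (s' - r))))
              * Real.exp (-((b + d + c + e)/2 * (s' - r'))) := by
          refine setIntegral_mono_set ((integrableOn_exp_shift_Iic' hBC2 s' s').const_mul _)
            (ae_of_all _ fun r' => by positivity)
            (HasSubset.Subset.eventuallyLE Ioc_subset_Iic_self)
        rw [integral_const_mul, integral_const_mul, integral_exp_shift_Iic' hBC2, one_div_div] at h2
        rw [integral_const_mul] at h1
        calc (∫ r' in Set.Ioc r s',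
            Real.exp (-(a * |r - r'|) - b * |r - s| - c * |r' - s'| - d * |r - s'| - e * |r' - s|))
            ≤ _ := le_trans h1 h2
          _ = (Real.exp (-(e * (s - s'))) * (2 / (b + d + c + e)))
              * Real.exp (-((a + b + d)/2 * (s' - r))) := by ring
      have hsum : ∀ r ∈ Set.Iic s', G r ≤
          (Real.exp (-(e * (s - s'))) * (1 / (a + c + e)))
            * Real.exp (-((b + d + c + e) * (s' - r)))
          + (Real.exp (-(e * (s - s'))) * (2 / (b + d + c + e)))
            * Real.exp (-((a + b + d)/2 * (s' - r))) := by
        intro r hr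
        have hGr : G r = (∫ r' in Set.Iic r,
            Real.exp (-(a * |r - r'|) - b * |r - s| - c * |r' - s'| - d * |r - s'| - e * |r' - s|))
            + ∫ r' in Set.Ioc r s',
            Real.exp (-(a * |r - r'|) - b * |r - s| - c * |r' - s'| - d * |r - s'| - e * |r' - s|) := by
          simp only [hGdef]
          rw [← setIntegral_union (Set.Iic_disjoint_Ioc le_rfl) measurableSet_Ioc
            ((hInner r).mono_set (Iic_subset_Iic.mpr hr)) ((hInner r).mono_set Ioc_subset_Iic_self),
            Set.Iic_union_Ioc_eq_Iic hr]
        rw [hGr]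
        exact add_le_add (hp1 r hr) (hp2 r hr)
      have hfin : (∫ r in Set.Iic s', G r) ≤
          (Real.exp (-(e * (s - s'))) * (1 / (a + c + e))) * (1 / (b + d + c + e))
          + (Real.exp (-(e * (s - s'))) * (2 / (b + d + c + e))) * (1 / ((a + b + d)/2)) := by
        have hint1 : IntegrableOn (fun r => (Real.exp (-(e * (s - s'))) * (1 / (a + c + e)))
            * Real.exp (-((b + d + c + e) * (s' - r)))) (Set.Iic s') :=
          (integrableOn_exp_shift_Iic' hBC s' s').const_mul _
        have hint2 : IntegrableOn (fun r => (Real.exp (-(e * (s - s'))) * (2 / (b + d + c + e)))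
            * Real.exp (-((a + b + d)/2 * (s' - r)))) (Set.Iic s') :=
          (integrableOn_exp_shift_Iic' haB2 s' s').const_mul _
        have h0 := integral_mono_of_nonneg (ae_of_all _ hGnn) (hint1.add hint2)
          (ae_restrict_of_forall_mem measurableSet_Iic hsum)
        simp only [Pi.add_apply] at h0
        rw [integral_add hint1 hint2, integral_const_mul, integral_const_mul,
          integral_exp_shift_Iic' hBC, integral_exp_shift_Iic' haB2] at h0
        exact h0
      calc (∫ r in Set.Iic s', G r) ≤ _ := hfin
        _ = Real.exp (-(e * (s - s'))) *
            (1 / ((a + c + e) * (b + d + c + e)) + 4 / ((a + b + d) * (b + d + c + e))) := by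
          rw [one_div_div, mul_assoc, mul_assoc, div_mul_div_comm, div_mul_div_comm]
          ring
  -- final assembly
  clear hGbound hGint hInner hGm hGnn hFc hp1
  have hm1 : min (b + d) (c + e) ≤ b + d := min_le_left _ _
  have hm2 : min (b + d) (c + e) ≤ c + e := min_le_right _ _
  have hmpos : 0 < min (b + d) (c + e) := lt_min (by linarith) (by linarith)
  have hD : 0 < (b + d) * (c + e) + a * min (b + d) (c + e) :=
    add_pos (mul_pos (show (0:ℝ) < b + d by linarith) hC) (mul_pos ha hmpos)
  have hX1 : (b + d) * (c + e) + a * min (b + d) (c + e) ≤ (a + c + e) * (b + d + c + e) := by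
    nlinarith [mul_le_mul_of_nonneg_left hm2 ha.le, sq_nonneg (c + e),
      mul_pos ha (show (0:ℝ) < b + d by linarith)]
  have hX2 : (b + d) * (c + e) + a * min (b + d) (c + e) ≤ (a + b + d) * (b + d + c + e) := by
    nlinarith [mul_le_mul_of_nonneg_left hm2 ha.le, sq_nonneg (b + d),
      mul_pos ha (show (0:ℝ) < b + d by linarith)]
  have hX3 : (b + d) * (c + e) + a * min (b + d) (c + e) ≤ (a + c + e) * (a + b + d) := by
    nlinarith [mul_le_mul_of_nonneg_left hm2 ha.le, sq_nonneg a,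
      mul_pos ha (show (0:ℝ) < b + d by linarith)]
  have e1 : 1 / ((a + c + e) * (b + d + c + e))
      ≤ 1 / ((b + d) * (c + e) + a * min (b + d) (c + e)) := by
    rw [div_le_div_iff₀ (by nlinarith) hD]; nlinarith
  have e2 : 4 / ((a + b + d) * (b + d + c + e))
      ≤ 4 / ((b + d) * (c + e) + a * min (b + d) (c + e)) := by
    rw [div_le_div_iff₀ (by nlinarith) hD]; nlinarith
  have e3 : 2 / ((a + c + e) * (a + b + d))
      ≤ 2 / ((b + d) * (c + e) + a * min (b + d) (c + e)) := by
    rw [div_le_div_iff₀ (by nlinarith) hD]; nlinarith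
  rw [hsplit]
  calc (∫ r in Set.Iic s', G r) + ∫ r in Set.Ioc s' s, G r
      ≤ Real.exp (-(e * (s - s'))) *
          (1 / ((a + c + e) * (b + d + c + e)) + 4 / ((a + b + d) * (b + d + c + e)))
        + Real.exp (-(e * (s - s'))) * (2 / ((a + c + e) * (a + b + d))) := add_le_add hRA hRB
    _ ≤ Real.exp (-(e * (s - s'))) *
          (1 / ((b + d) * (c + e) + a * min (b + d) (c + e))
           + 4 / ((b + d) * (c + e) + a * min (b + d) (c + e)))
        + Real.exp (-(e * (s - s'))) * (2 / ((b + d) * (c + e) + a * min (b + d) (c + e))) :=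
      add_le_add (mul_le_mul_of_nonneg_left (add_le_add e1 e2) (Real.exp_pos _).le)
        (mul_le_mul_of_nonneg_left e3 (Real.exp_pos _).le)
    _ = 7 * Real.exp (-(e * (s - s'))) / ((b + d) * (c + e) + a * min (b + d) (c + e)) := by
      ring


lemma exp_coeff (m k t : ℝ) (hm : 0 ≤ m) (hmk : m ≤ k) (ht : 0 ≤ t) :
    7 * Real.exp (-(k * t)) ≤ 10 * Real.exp (-(m * t / 2)) := by
  have h1 : -(k * t) ≤ -(m * t / 2) := by
    have h2 : m * t ≤ k * t := mul_le_mul_of_nonneg_right hmk ht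
    have h3 : 0 ≤ m * t := mul_nonneg hm ht
    linarith
  have h4 := Real.exp_le_exp.mpr h1
  nlinarith [Real.exp_pos (-(m * t / 2))]


set_option maxHeartbeats 1000000 in
/-- Proposition A.7: bound on a general double exponential integral. -/
theorem stmt_7 (s s' a b c d e : ℝ) (ha : 0 < a) (hb : 0 < b) (hc : 0 < c)
    (hd : 0 < d) (he : 0 < e) :
    (∫ r in Set.Iic s, ∫ r' in Set.Iic s',
        Real.exp (-(a * |r - r'|) - b * |r - s| - c * |r' - s'|
                  - d * |r - s'| - e * |r' - s|))
      ≤ 10 * Real.exp (-(min d e * |s - s'| / 2))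
          / ((b + d) * (c + e) + a * min (b + d) (c + e)) := by
  have hmpos : 0 < min (b + d) (c + e) := lt_min (by linarith) (by linarith)
  have hD : 0 < (b + d) * (c + e) + a * min (b + d) (c + e) :=
    add_pos (mul_pos (by linarith) (by linarith)) (mul_pos ha hmpos)
  rcases le_total s' s with hss | hss
  · have h := case_main s s' a b c d e ha hb hc hd he hss
    refine h.trans ?_
    rw [abs_of_nonneg (show (0:ℝ) ≤ s - s' by linarith), div_le_div_iff₀ hD hD]
    exact mul_le_mul_of_nonneg_right
      (exp_coeff (min d e) e (s - s') (le_min hd.le he.le) (min_le_right d e)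
        (by linarith)) hD.le
  · have h := case_main s' s a c b e d ha hc hb he hd hss
    have hcont : Continuous (fun p : ℝ × ℝ => Real.exp (-(a * |p.1 - p.2|) - b * |p.1 - s|
        - c * |p.2 - s'| - d * |p.1 - s'| - e * |p.2 - s|)) := by fun_prop
    have hprod : Integrable (Function.uncurry fun r r' =>
        Real.exp (-(a * |r - r'|) - b * |r - s| - c * |r' - s'| - d * |r - s'| - e * |r' - s|))
        ((volume.restrict (Set.Iic s)).prod (volume.restrict (Set.Iic s'))) := by
      refine Integrable.mono' (Integrable.mul_prod (f := fun x => Real.exp (-(b * (s - x))))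
        (g := fun x => Real.exp (-(c * (s' - x))))
        (integrableOn_exp_shift_Iic' hb s s) (integrableOn_exp_shift_Iic' hc s' s'))
        hcont.aestronglyMeasurable ?_
      rw [Measure.prod_restrict]
      refine ae_restrict_of_forall_mem (measurableSet_Iic.prod measurableSet_Iic) fun p hp => ?_
      obtain ⟨x, y⟩ := p
      obtain ⟨hp1, hp2⟩ := hp
      have hp1' : x ≤ s := hp1
      have hp2' : y ≤ s' := hp2
      simp only [Function.uncurry_apply_pair]
      rw [norm_of_nonneg (Real.exp_pos _).le, ← Real.exp_add]
      apply Real.exp_le_exp.mpr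
      rw [abs_of_nonpos (show x - s ≤ 0 by linarith),
        abs_of_nonpos (show y - s' ≤ 0 by linarith)]
      have n1 := mul_nonneg ha.le (abs_nonneg (x - y))
      have n2 := mul_nonneg hd.le (abs_nonneg (x - s'))
      have n3 := mul_nonneg he.le (abs_nonneg (y - s))
      linarith
    have hfun : ∀ v u : ℝ, Real.exp (-(a * |u - v|) - b * |u - s| - c * |v - s'|
          - d * |u - s'| - e * |v - s|)
        = Real.exp (-(a * |v - u|) - c * |v - s'| - b * |u - s| - e * |v - s| - d * |u - s'|) := by
      intro v u
      rw [abs_sub_comm u v]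
      ring_nf
    rw [integral_integral_swap hprod]
    simp only [hfun]
    refine h.trans ?_
    have hden : (c + e) * (b + d) + a * min (c + e) (b + d)
        = (b + d) * (c + e) + a * min (b + d) (c + e) := by
      rw [min_comm, mul_comm]
    rw [hden, abs_of_nonpos (show s - s' ≤ 0 by linarith), neg_sub, div_le_div_iff₀ hD hD]
    exact mul_le_mul_of_nonneg_right
      (exp_coeff (min d e) d (s' - s) (le_min hd.le he.le) (min_le_left d e)
        (by linarith)) hD.le
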